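/- For every positive integer n, 2 * ∑_{k=1}^{n} C(2n-1, 2k-1) * L(2k-1) = L(4n-2) - L(2n-1). -/

import Mathlib

open Finset

lemma pascal_sum (f : ℕ → ℤ) (m : ℕ) :
    ∑ k ∈ range (m+2), ((m+1).choose k : ℤ) * f k
      = ∑ k ∈ range (m+1), (m.choose k : ℤ) * f k
        + ∑ k ∈ range (m+1), (m.choose k : ℤ) * f (k+1) := by
  rw [Finset.sum_range_succ' _ (m+1)]
  have h1 : ∀ k ∈ range (m+1), ((m+1).choose (k+1) : ℤ) * f (k+1)
      = (m.choose k : ℤ) * f (k+1) + (m.choose (k+1) : ℤ) * f (k+1) := by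
    intro k _; rw [Nat.choose_succ_succ]; push_cast; ring
  rw [Finset.sum_congr rfl h1, Finset.sum_add_distrib]
  have h2 : ∑ k ∈ range (m+1), (m.choose (k+1) : ℤ) * f (k+1)
      = ∑ k ∈ range m, (m.choose (k+1) : ℤ) * f (k+1) := by
    rw [Finset.sum_range_succ, Nat.choose_succ_self]; simp
  have h3 : ∑ k ∈ range (m+1), (m.choose k : ℤ) * f k
      = ∑ k ∈ range m, (m.choose (k+1) : ℤ) * f (k+1) + (m.choose 0 : ℤ) * f 0 := by
    rw [Finset.sum_range_succ' _ m]
  rw [h2, h3]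
  simp
  ring

lemma lucas_sum (L : ℕ → ℤ) (hL0 : L 0 = 2) (hL1 : L 1 = 1)
    (hL : ∀ n : ℕ, L (n + 2) = L (n + 1) + L n) (m : ℕ) :
    (∑ k ∈ range (m+1), (m.choose k : ℤ) * L k = L (2*m))
    ∧ (∑ k ∈ range (m+1), (m.choose k : ℤ) * L (k+1) = L (2*m+1)) := by
  induction m with
  | zero => simp [hL0, hL1]
  | succ m ih =>
    obtain ⟨hS, hT⟩ := ih
    constructor
    · rw [show m+1+1 = m+2 from rfl, pascal_sum, hS, hT]
      have h1 := hL (2*m)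
      have e2 : 2*(m+1) = 2*m+2 := by ring
      rw [e2]; omega
    · rw [show m+1+1 = m+2 from rfl, pascal_sum (fun k => L (k+1)) m]
      have e : ∑ k ∈ range (m+1), (m.choose k : ℤ) * L (k+1+1)
          = ∑ k ∈ range (m+1), ((m.choose k : ℤ) * L (k+1) + (m.choose k : ℤ) * L k) := by
        apply Finset.sum_congr rfl; intro k _; rw [hL k]; ring
      simp only [e, Finset.sum_add_distrib, hS, hT]
      have h1 := hL (2*m); have h2 := hL (2*m+1)
      have : 2*(m+1) = 2*m+2 := by ring
      rw [this]
      have : 2*m+2+1 = 2*m+1+2 := by ring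
      rw [this, h2]
      have e3 : 2*m+1+1 = 2*m+2 := by ring
      rw [e3]; omega

lemma lucas_alt_sum (L : ℕ → ℤ) (hL0 : L 0 = 2) (hL1 : L 1 = 1)
    (hL : ∀ n : ℕ, L (n + 2) = L (n + 1) + L n) (m : ℕ) :
    (∑ k ∈ range (m+2), ((m+1).choose k : ℤ) * ((-1)^k * L k) = L (m+1))
    ∧ (∑ k ∈ range (m+2), ((m+1).choose k : ℤ) * ((-1)^k * L (k+1)) = -L m) := by
  induction m with
  | zero =>
    have h2 := hL 0
    have h2' : L 2 = 3 := by have := hL 0; rw [show (0:ℕ)+2 = 2 from rfl, show (0:ℕ)+1 = 1 from rfl] at this; omega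
    simp [Finset.sum_range_succ, hL0, hL1, h2']
  | succ m ih =>
    obtain ⟨hA, hB⟩ := ih
    constructor
    · rw [show m+1+2 = (m+1)+2 from rfl, pascal_sum (fun k => (-1)^k * L k) (m+1)]
      have e : ∑ k ∈ range (m+2), ((m+1).choose k : ℤ) * ((-1)^(k+1) * L (k+1))
          = -∑ k ∈ range (m+2), ((m+1).choose k : ℤ) * ((-1)^k * L (k+1)) := by
        rw [← Finset.sum_neg_distrib]
        apply Finset.sum_congr rfl; intro k _; ring
      simp only [e, hA, hB]
      have h1 := hL m
      have e2 : m+1+1 = m+2 := rfl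
      rw [e2]; omega
    · rw [pascal_sum (fun k => (-1)^k * L (k+1)) (m+1)]
      have e : ∑ k ∈ range (m+2), ((m+1).choose k : ℤ) * ((-1)^(k+1) * L (k+1+1))
          = -∑ k ∈ range (m+2), (((m+1).choose k : ℤ) * ((-1)^k * L (k+1))
              + ((m+1).choose k : ℤ) * ((-1)^k * L k)) := by
        rw [← Finset.sum_neg_distrib]
        apply Finset.sum_congr rfl; intro k _; rw [hL k]; ring
      simp only [e, Finset.sum_add_distrib, hA, hB]
      ring

lemma odd_part (g : ℕ → ℤ) (j : ℕ) :
    ∑ k ∈ range (2*j+2), (1 - (-1:ℤ)^k) * g k = 2 * ∑ i ∈ range (j+1), g (2*i+1) := by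
  induction j with
  | zero => simp [Finset.sum_range_succ]
  | succ j ih =>
    have e : 2*(j+1)+2 = (2*j+2)+1+1 := by ring
    have p1 : (-1:ℤ)^(2*j+2) = 1 := by
      rw [show 2*j+2 = 2*(j+1) from by ring, pow_mul]; norm_num
    have p2 : (-1:ℤ)^(2*j+2+1) = -1 := by rw [pow_succ, p1]; ring
    rw [e, Finset.sum_range_succ, Finset.sum_range_succ, ih, p1, p2,
      Finset.sum_range_succ (fun i => g (2*i+1)) (j+1), show 2*(j+1)+1 = 2*j+2+1 from by ring]
    ring

theorem stmt9 (L : ℕ → ℤ) (hL0 : L 0 = 2) (hL1 : L 1 = 1)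
    (hL : ∀ n : ℕ, L (n + 2) = L (n + 1) + L n) (n : ℕ) (hn : 0 < n) :
    2 * ∑ k ∈ Finset.Icc 1 n, ((2 * n - 1).choose (2 * k - 1) : ℤ) * L (2 * k - 1)
      = L (4 * n - 2) - L (2 * n - 1) := by
  obtain ⟨j, rfl⟩ : ∃ j, n = j + 1 := ⟨n-1, by omega⟩
  have hS := (lucas_sum L hL0 hL1 hL (2*j+1)).1
  have hA := (lucas_alt_sum L hL0 hL1 hL (2*j)).1
  rw [show 2*j+1+1 = 2*j+2 from rfl] at hS
  rw [show 2*j+2 = 2*j+2 from rfl] at hA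
  have hdiff : ∑ k ∈ range (2*j+2), (1 - (-1:ℤ)^k) * (((2*j+1).choose k : ℤ) * L k)
      = L (2*(2*j+1)) - L (2*j+1) := by
    have e : ∀ k ∈ range (2*j+2), (1 - (-1:ℤ)^k) * (((2*j+1).choose k : ℤ) * L k)
        = ((2*j+1).choose k : ℤ) * L k - ((2*j+1).choose k : ℤ) * ((-1)^k * L k) := by
      intro k _; ring
    rw [Finset.sum_congr rfl e, Finset.sum_sub_distrib, hS, hA]
  rw [odd_part] at hdiff
  have hre : ∑ k ∈ Finset.Icc 1 (j+1), (((2*(j+1)-1).choose (2*k-1) : ℤ)) * L (2*k-1)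
      = ∑ i ∈ range (j+1), ((2*j+1).choose (2*i+1) : ℤ) * L (2*i+1) := by
    rw [← Finset.Ico_add_one_right_eq_Icc, Finset.sum_Ico_eq_sum_range,
      show j+1+1-1 = j+1 from by omega]
    apply Finset.sum_congr rfl
    intro i _
    rw [show 2*(j+1)-1 = 2*j+1 from by omega, show 2*(1+i)-1 = 2*i+1 from by omega]
  rw [hre, hdiff, show 4*(j+1)-2 = 2*(2*j+1) from by omega, show 2*(j+1)-1 = 2*j+1 from by omega]
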